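/- Let f : 2^Ω → ℝ≥0 be monotone and submodular with multilinear extension F. For any x ∈ [0,1]^Ω and any direction y ∈ ℝ^Ω with y ≥ 0, the univariate function ξ ↦ F(x + ξ·y) is concave on the interval where x + ξ·y remains in [0,1]^Ω. -/

import Mathlib

set_option linter.unusedSectionVars false
set_option linter.unusedVariables false

open Finset

noncomputable def mlext {Ω : Type*} [Fintype Ω] [DecidableEq Ω]
    (f : Finset Ω → ℝ) (x : Ω → ℝ) : ℝ :=
  ∑ S : Finset Ω, f S * ((∏ e ∈ S, x e) * ∏ e ∈ Sᶜ, (1 - x e))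

section Aux

variable {Ω : Type*} [Fintype Ω] [DecidableEq Ω]

/-- the factor for element `e` given set `S`. -/
noncomputable def wfn (x y : Ω → ℝ) (S : Finset Ω) (e : Ω) (ξ : ℝ) : ℝ :=
  if e ∈ S then x e + ξ * y e else 1 - (x e + ξ * y e)

noncomputable def dfn (y : Ω → ℝ) (S : Finset Ω) (e : Ω) : ℝ :=
  if e ∈ S then y e else -(y e)

lemma hasDerivAt_wfn (x y : Ω → ℝ) (S : Finset Ω) (e : Ω) (ξ : ℝ) :
    HasDerivAt (wfn x y S e) (dfn y S e) ξ := by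
  unfold wfn dfn
  by_cases h : e ∈ S <;> simp only [h, if_true, if_false]
  · exact (hasDerivAt_mul_const (y e)).const_add (x e)
  · exact ((hasDerivAt_mul_const (y e)).const_add (x e)).const_sub 1

lemma hasDerivAt_prod (x y : Ω → ℝ) (S : Finset Ω) (s : Finset Ω) (ξ : ℝ) :
    HasDerivAt (fun ξ => ∏ e ∈ s, wfn x y S e ξ)
      (∑ i ∈ s, (∏ j ∈ s.erase i, wfn x y S j ξ) * dfn y S i) ξ := by
  have := HasDerivAt.fun_finsetProd (u := s) (f := fun e => wfn x y S e)
    (f' := fun e => dfn y S e) (x := ξ) (fun i _ => hasDerivAt_wfn x y S i ξ)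
  simpa [smul_eq_mul] using this

lemma wfn_nonneg (x y : Ω → ℝ) (S : Finset Ω) (e : Ω) {ξ : ℝ}
    (hξ : x e + ξ * y e ∈ Set.Icc (0:ℝ) 1) : 0 ≤ wfn x y S e ξ := by
  obtain ⟨h0, h1⟩ := hξ
  unfold wfn; split <;> linarith

end Aux

theorem keySum {Ω : Type*} [Fintype Ω] [DecidableEq Ω] (f : Finset Ω → ℝ)
    (hsub : ∀ S T : Finset Ω, f (S ∪ T) + f (S ∩ T) ≤ f S + f T)
    (x y : Ω → ℝ) (hy : ∀ e, 0 ≤ y e) (ξ : ℝ)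
    (hξ : ∀ e, x e + ξ * y e ∈ Set.Icc (0:ℝ) 1) (i j : Ω) (hij : j ≠ i) :
    ∑ S : Finset Ω, f S * ((∏ k ∈ (univ.erase i).erase j, wfn x y S k ξ) *
      (dfn y S j * dfn y S i)) ≤ 0 := by
  set u := ((univ : Finset Ω).erase i).erase j with hu
  have hju : j ∉ u := notMem_erase j _
  have hiu : i ∉ u := fun h => notMem_erase i _ (mem_of_mem_erase h)
  have hi_ins : i ∉ insert j u := by simp [hij.symm, hiu, Ne.symm]
  have huniv : insert i (insert j u) = univ := by
    rw [hu, insert_erase (mem_erase.2 ⟨hij, mem_univ j⟩), insert_erase (mem_univ i)]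
  set T : Finset Ω → ℝ := fun S =>
    f S * ((∏ k ∈ u, wfn x y S k ξ) * (dfn y S j * dfn y S i)) with hT
  have step1 : ∑ S : Finset Ω, T S = ∑ S ∈ (insert i (insert j u)).powerset, T S := by
    rw [huniv, powerset_univ]
  rw [step1, sum_powerset_insert hi_ins, sum_powerset_insert hju, sum_powerset_insert hju,
    add_add_add_comm, ← sum_add_distrib, ← sum_add_distrib, ← sum_add_distrib]
  apply sum_nonpos
  intro R hR
  have hRu : R ⊆ u := mem_powerset.1 hR
  have hiR : i ∉ R := fun h => hiu (hRu h)
  have hjR : j ∉ R := fun h => hju (hRu h)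
  -- products agree
  have hP : ∀ S : Finset Ω, (∀ k ∈ u, (k ∈ S ↔ k ∈ R)) →
      ∏ k ∈ u, wfn x y S k ξ = ∏ k ∈ u, wfn x y R k ξ := by
    intro S h
    refine prod_congr rfl fun k hk => ?_
    unfold wfn
    rw [if_congr (h k hk) rfl rfl]
  have hku : ∀ k ∈ u, k ≠ i ∧ k ≠ j := by
    intro k hk
    exact ⟨ne_of_mem_erase (mem_of_mem_erase hk), ne_of_mem_erase hk⟩
  have hP1 : ∏ k ∈ u, wfn x y (insert j R) k ξ = ∏ k ∈ u, wfn x y R k ξ := by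
    refine hP _ fun k hk => ?_; simp [mem_insert, (hku k hk).2]
  have hP2 : ∏ k ∈ u, wfn x y (insert i R) k ξ = ∏ k ∈ u, wfn x y R k ξ := by
    refine hP _ fun k hk => ?_; simp [mem_insert, (hku k hk).1]
  have hP3 : ∏ k ∈ u, wfn x y (insert i (insert j R)) k ξ = ∏ k ∈ u, wfn x y R k ξ := by
    refine hP _ fun k hk => ?_; simp [mem_insert, (hku k hk).1, (hku k hk).2]
  -- dfn values
  have dRj : dfn y R j = -(y j) := if_neg hjR
  have dRi : dfn y R i = -(y i) := if_neg hiR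
  have djRj : dfn y (insert j R) j = y j := if_pos (mem_insert_self j R)
  have djRi : dfn y (insert j R) i = -(y i) := if_neg (by simp [hiR, hij.symm])
  have diRj : dfn y (insert i R) j = -(y j) := if_neg (by simp [hjR, hij])
  have diRi : dfn y (insert i R) i = y i := if_pos (mem_insert_self i R)
  have dijj : dfn y (insert i (insert j R)) j = y j := if_pos (by simp)
  have diji : dfn y (insert i (insert j R)) i = y i := if_pos (mem_insert_self _ _)
  have hunion : insert i R ∪ insert j R = insert i (insert j R) := by
    simp [insert_union, union_insert, union_self, Finset.insert_comm]
  have hinter : insert i R ∩ insert j R = R := by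
    ext k
    simp only [mem_inter, mem_insert]
    constructor
    · rintro ⟨h1 | h1, h2 | h2⟩
      exacts [absurd (h2.symm.trans h1) hij, h2, h1, h1]
    · intro h; exact ⟨Or.inr h, Or.inr h⟩
  have hsb := hsub (insert i R) (insert j R)
  rw [hunion, hinter] at hsb
  have hPnon : 0 ≤ ∏ k ∈ u, wfn x y R k ξ :=
    prod_nonneg fun k _ => wfn_nonneg x y R k (hξ k)
  calc T R + T (insert i R) + (T (insert j R) + T (insert i (insert j R)))
      = (f (insert i (insert j R)) + f R - f (insert i R) - f (insert j R)) *
        ((∏ k ∈ u, wfn x y R k ξ) * (y j * y i)) := by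
        rw [hT]; dsimp only; rw [hP1, hP2, hP3, dRj, dRi, djRj, djRi, diRj, diRi, dijj, diji]
        ring
    _ ≤ 0 := mul_nonpos_of_nonpos_of_nonneg (by linarith)
        (mul_nonneg hPnon (mul_nonneg (hy j) (hy i)))

theorem stmt_1 {Ω : Type*} [Fintype Ω] [DecidableEq Ω] (f : Finset Ω → ℝ)
    (hnonneg : ∀ S, 0 ≤ f S)
    (hmono : ∀ S T : Finset Ω, S ⊆ T → f S ≤ f T)
    (hsub : ∀ S T : Finset Ω, f (S ∪ T) + f (S ∩ T) ≤ f S + f T)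
    (x y : Ω → ℝ) (hy : ∀ e, 0 ≤ y e) :
    ConcaveOn ℝ {ξ : ℝ | ∀ e, x e + ξ * y e ∈ Set.Icc (0:ℝ) 1}
      (fun ξ => mlext f (fun e => x e + ξ * y e)) := by
  classical
  set D := {ξ : ℝ | ∀ e, x e + ξ * y e ∈ Set.Icc (0:ℝ) 1} with hDdef
  have hfun : (fun ξ => mlext f (fun e => x e + ξ * y e)) =
      fun ξ => ∑ S : Finset Ω, f S * ∏ e ∈ univ, wfn x y S e ξ := by
    funext ξ
    unfold mlext
    refine Finset.sum_congr rfl fun S _ => ?_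
    congr 1
    rw [← Finset.prod_mul_prod_compl S (fun e => wfn x y S e ξ)]
    congr 1
    · exact prod_congr rfl fun e he => (if_pos he).symm
    · exact prod_congr rfl fun e he => (if_neg (mem_compl.1 he)).symm
  rw [hfun]
  set g1 : ℝ → ℝ := fun ξ => ∑ S : Finset Ω, f S *
    ∑ i ∈ univ, (∏ j ∈ univ.erase i, wfn x y S j ξ) * dfn y S i with hg1
  set g2 : ℝ → ℝ := fun ξ => ∑ S : Finset Ω, f S *
    ∑ i ∈ univ, (∑ j ∈ univ.erase i,
      (∏ k ∈ (univ.erase i).erase j, wfn x y S k ξ) * dfn y S j) * dfn y S i with hg2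
  have hd1 : ∀ ξ : ℝ, HasDerivAt
      (fun ξ => ∑ S : Finset Ω, f S * ∏ e ∈ univ, wfn x y S e ξ) (g1 ξ) ξ := by
    intro ξ
    exact HasDerivAt.fun_sum fun S _ => (hasDerivAt_prod x y S univ ξ).const_mul (f S)
  have hd2 : ∀ ξ : ℝ, HasDerivAt g1 (g2 ξ) ξ := by
    intro ξ
    refine HasDerivAt.fun_sum fun S _ => HasDerivAt.const_mul (f S) ?_
    exact HasDerivAt.fun_sum fun i _ =>
      (hasDerivAt_prod x y S (univ.erase i) ξ).mul_const (dfn y S i)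
  have hg2le : ∀ ξ : ℝ, ξ ∈ D → g2 ξ ≤ 0 := by
    intro ξ hξ
    have hrw : g2 ξ = ∑ i ∈ univ, ∑ j ∈ univ.erase i, ∑ S : Finset Ω,
        f S * ((∏ k ∈ (univ.erase i).erase j, wfn x y S k ξ) * (dfn y S j * dfn y S i)) := by
      rw [hg2]
      simp only [Finset.mul_sum, Finset.sum_mul, mul_assoc]
      rw [Finset.sum_comm]
      exact Finset.sum_congr rfl fun i _ => Finset.sum_comm
    rw [hrw]
    refine sum_nonpos fun i _ => sum_nonpos fun j hj => ?_
    exact keySum f hsub x y hy ξ hξ i j (ne_of_mem_erase hj)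
  have hDconv : Convex ℝ D := by
    intro ξ1 h1 ξ2 h2 a b ha hb hab
    intro e
    have hmem := convex_Icc (0:ℝ) 1 (h1 e) (h2 e) ha hb hab
    have heq : x e + (a • ξ1 + b • ξ2) * y e
        = a • (x e + ξ1 * y e) + b • (x e + ξ2 * y e) := by
      simp only [smul_eq_mul]
      linear_combination (x e) * hab.symm
    rw [heq]
    exact hmem
  refine concaveOn_of_hasDerivWithinAt2_nonpos hDconv ?_
    (fun ξ _ => (hd1 ξ).hasDerivWithinAt) (fun ξ _ => (hd2 ξ).hasDerivWithinAt)
    (fun ξ hξ => hg2le ξ (interior_subset hξ))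
  exact (continuous_iff_continuousAt.2 fun ξ => (hd1 ξ).continuousAt).continuousOn
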